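/- For all real (v,u): (a) for every integer p ≥ 0, v·∂θ_{2,p}/∂v + 2·∂θ_{2,p}/∂u = (p+1)·θ_{2,p}; and (b) for every integer p ≥ 1, v·∂θ_{1,p}/∂v + 2·∂θ_{1,p}/∂u = p·θ_{1,p} + 2·θ_{2,p−1}. That is, the action of the Euler vector field E = v∂_v + 2∂_u on the functions θ_{α,p} is quasihomogeneous of degree p + μ_α + 1/2 up to the resonance term given by the matrix R (R^2_1 = 2 being its only nonzero entry). -/

import Mathlib

/-!
The dispersionless Hamiltonian densities `θ_{α,p}(v,u)` of the extended Toda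
hierarchy and their partial derivatives.
-/

noncomputable section Toda

/-- The harmonic number `H_m = Σ_{j=1}^m 1/j`. -/
def harm (m : ℕ) : ℝ := ∑ j ∈ Finset.Icc 1 m, (1 : ℝ) / (j : ℝ)

/-- `θ_{2,p}(v,u) = Σ_{2m ≤ p+1} e^{mu} v^{p+1−2m} / ((m!)² (p+1−2m)!)`. -/
def theta2 (p : ℕ) (v u : ℝ) : ℝ :=
  ∑ m ∈ Finset.range ((p + 1) / 2 + 1),
    Real.exp (m * u) * v ^ (p + 1 - 2 * m) /
      ((Nat.factorial m : ℝ) ^ 2 * (Nat.factorial (p + 1 - 2 * m) : ℝ))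

/-- `θ_{1,p}(v,u) = −2 Σ_{2m ≤ p} (H_m − u/2) e^{mu} v^{p−2m} / ((m!)² (p−2m)!)`. -/
def theta1 (p : ℕ) (v u : ℝ) : ℝ :=
  -2 * ∑ m ∈ Finset.range (p / 2 + 1),
    (harm m - u / 2) * Real.exp (m * u) * v ^ (p - 2 * m) /
      ((Nat.factorial m : ℝ) ^ 2 * (Nat.factorial (p - 2 * m) : ℝ))

/-- Partial derivative in the first variable `v`. -/
def dv (f : ℝ → ℝ → ℝ) (v u : ℝ) : ℝ := deriv (fun v' => f v' u) v

/-- Partial derivative in the second variable `u`. -/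
def du (f : ℝ → ℝ → ℝ) (v u : ℝ) : ℝ := deriv (fun u' => f v u') u

private lemma v_mul_pow (v : ℝ) (k : ℕ) : v * ((k : ℝ) * v ^ (k - 1)) = (k : ℝ) * v ^ k := by
  cases k with
  | zero => simp
  | succ n => rw [Nat.succ_sub_one, pow_succ]; ring

private lemma term2 (v e c : ℝ) (k m q : ℕ) (hk : (k : ℝ) + 2 * m = (q : ℝ) + 1) :
    v * (e * ((k : ℝ) * v ^ (k - 1)) / c) + 2 * (e * ((m : ℝ) * 1) * v ^ k / c)
      = ((q : ℝ) + 1) * (e * v ^ k / c) := by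
  calc v * (e * ((k : ℝ) * v ^ (k - 1)) / c) + 2 * (e * ((m : ℝ) * 1) * v ^ k / c)
      = e * (v * ((k : ℝ) * v ^ (k - 1))) / c + 2 * (e * (m : ℝ) * v ^ k / c) := by ring
    _ = e * ((k : ℝ) * v ^ k) / c + 2 * (e * (m : ℝ) * v ^ k / c) := by rw [v_mul_pow]
    _ = ((k : ℝ) + 2 * m) * (e * v ^ k / c) := by ring
    _ = ((q : ℝ) + 1) * (e * v ^ k / c) := by rw [hk]

private lemma term1 (v a e c : ℝ) (k m q : ℕ) (hk : (k : ℝ) + 2 * m = (q : ℝ) + 1) :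
    v * (a * e * ((k : ℝ) * v ^ (k - 1)) / c)
      + 2 * ((-(1/2) * e + a * (e * ((m : ℝ) * 1))) * v ^ k / c)
      = ((q : ℝ) + 1) * (a * e * v ^ k / c) - e * v ^ k / c := by
  calc v * (a * e * ((k : ℝ) * v ^ (k - 1)) / c)
        + 2 * ((-(1/2) * e + a * (e * ((m : ℝ) * 1))) * v ^ k / c)
      = a * e * (v * ((k : ℝ) * v ^ (k - 1))) / c
        + 2 * ((-(1/2) * e + a * (e * (m : ℝ))) * v ^ k / c) := by ring
    _ = a * e * ((k : ℝ) * v ^ k) / c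
        + 2 * ((-(1/2) * e + a * (e * (m : ℝ))) * v ^ k / c) := by rw [v_mul_pow]
    _ = ((k : ℝ) + 2 * m) * (a * e * v ^ k / c) - e * v ^ k / c := by ring
    _ = _ := by rw [hk]

/-- Quasihomogeneity of the `θ_{α,p}` under the Euler vector field `E = v∂_v + 2∂_u`:
(a) `E θ_{2,p} = (p+1) θ_{2,p}` for `p ≥ 0`; and
(b) `E θ_{1,p} = p θ_{1,p} + 2 θ_{2,p−1}` for `p ≥ 1`. -/
theorem theta_euler_quasihomogeneity (v u : ℝ) :
    (∀ p : ℕ, v * dv (theta2 p) v u + 2 * du (theta2 p) v u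
        = ((p : ℝ) + 1) * theta2 p v u) ∧
    (∀ p : ℕ, 1 ≤ p → v * dv (theta1 p) v u + 2 * du (theta1 p) v u
        = (p : ℝ) * theta1 p v u + 2 * theta2 (p - 1) v u) := by
  constructor
  · intro p
    have hdv : HasDerivAt (fun v' => theta2 p v' u)
        (∑ m ∈ Finset.range ((p + 1) / 2 + 1),
          Real.exp (m * u) * ((p + 1 - 2 * m : ℕ) * v ^ (p + 1 - 2 * m - 1)) /
            ((Nat.factorial m : ℝ) ^ 2 * (Nat.factorial (p + 1 - 2 * m) : ℝ))) v := by
      apply HasDerivAt.fun_sum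
      intro m _
      exact ((hasDerivAt_pow _ v).const_mul _).div_const _
    have hdu : HasDerivAt (fun u' => theta2 p v u')
        (∑ m ∈ Finset.range ((p + 1) / 2 + 1),
          Real.exp (m * u) * ((m : ℝ) * 1) * v ^ (p + 1 - 2 * m) /
            ((Nat.factorial m : ℝ) ^ 2 * (Nat.factorial (p + 1 - 2 * m) : ℝ))) u := by
      apply HasDerivAt.fun_sum
      intro m _
      exact ((((hasDerivAt_id u).const_mul ((m : ℕ) : ℝ)).exp).mul_const _).div_const _
    rw [dv, du, hdv.deriv, hdu.deriv, theta2, Finset.mul_sum, Finset.mul_sum, Finset.mul_sum,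
      ← Finset.sum_add_distrib]
    refine Finset.sum_congr rfl fun m hm => ?_
    have hm2 : 2 * m ≤ p + 1 := by
      have := Finset.mem_range.mp hm; omega
    exact term2 v _ _ _ m p (by rw [Nat.cast_sub hm2]; push_cast; ring)
  · intro p hp
    obtain ⟨q, rfl⟩ : ∃ q, p = q + 1 := ⟨p - 1, (Nat.succ_pred_eq_of_pos hp).symm⟩
    have hdv : HasDerivAt (fun v' => theta1 (q + 1) v' u)
        (-2 * ∑ m ∈ Finset.range ((q + 1) / 2 + 1),
          (harm m - u / 2) * Real.exp (m * u) * ((q + 1 - 2 * m : ℕ) * v ^ (q + 1 - 2 * m - 1)) /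
            ((Nat.factorial m : ℝ) ^ 2 * (Nat.factorial (q + 1 - 2 * m) : ℝ))) v := by
      apply HasDerivAt.const_mul
      apply HasDerivAt.fun_sum
      intro m _
      exact ((hasDerivAt_pow _ v).const_mul _).div_const _
    have hdu : HasDerivAt (fun u' => theta1 (q + 1) v u')
        (-2 * ∑ m ∈ Finset.range ((q + 1) / 2 + 1),
          (-(1/2) * Real.exp (m * u) + (harm m - u / 2) * (Real.exp (m * u) * ((m : ℝ) * 1)))
            * v ^ (q + 1 - 2 * m) /
            ((Nat.factorial m : ℝ) ^ 2 * (Nat.factorial (q + 1 - 2 * m) : ℝ))) u := by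
      apply HasDerivAt.const_mul
      apply HasDerivAt.fun_sum
      intro m _
      have h1 : HasDerivAt (fun u' : ℝ => harm m - u' / 2) (-(1/2)) u := by
        simpa using ((hasDerivAt_id u).div_const 2).const_sub (harm m)
      have h2 : HasDerivAt (fun u' : ℝ => Real.exp (m * u')) (Real.exp (m * u) * ((m : ℝ) * 1)) u :=
        ((hasDerivAt_id u).const_mul ((m : ℕ) : ℝ)).exp
      exact ((h1.mul h2).mul_const _).div_const _
    have key :
        v * ∑ m ∈ Finset.range ((q + 1) / 2 + 1),
            (harm m - u / 2) * Real.exp (m * u) * ((q + 1 - 2 * m : ℕ) * v ^ (q + 1 - 2 * m - 1)) /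
              ((Nat.factorial m : ℝ) ^ 2 * (Nat.factorial (q + 1 - 2 * m) : ℝ))
          + 2 * ∑ m ∈ Finset.range ((q + 1) / 2 + 1),
            (-(1/2) * Real.exp (m * u) + (harm m - u / 2) * (Real.exp (m * u) * ((m : ℝ) * 1)))
              * v ^ (q + 1 - 2 * m) /
              ((Nat.factorial m : ℝ) ^ 2 * (Nat.factorial (q + 1 - 2 * m) : ℝ))
        = ((q : ℝ) + 1) * ∑ m ∈ Finset.range ((q + 1) / 2 + 1),
            (harm m - u / 2) * Real.exp (m * u) * v ^ (q + 1 - 2 * m) /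
              ((Nat.factorial m : ℝ) ^ 2 * (Nat.factorial (q + 1 - 2 * m) : ℝ))
          - ∑ m ∈ Finset.range ((q + 1) / 2 + 1),
            Real.exp (m * u) * v ^ (q + 1 - 2 * m) /
              ((Nat.factorial m : ℝ) ^ 2 * (Nat.factorial (q + 1 - 2 * m) : ℝ)) := by
      rw [Finset.mul_sum, Finset.mul_sum, Finset.mul_sum, ← Finset.sum_add_distrib,
        ← Finset.sum_sub_distrib]
      refine Finset.sum_congr rfl fun m hm => ?_
      have hm2 : 2 * m ≤ q + 1 := by
        have := Finset.mem_range.mp hm; omega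
      exact term1 v _ _ _ _ m q (by rw [Nat.cast_sub hm2]; push_cast; ring)
    rw [dv, du, hdv.deriv, hdu.deriv]
    show _ = ((q + 1 : ℕ) : ℝ) * theta1 (q + 1) v u + 2 * theta2 (q + 1 - 1) v u
    rw [theta1, theta2]
    push_cast
    linear_combination (-2 : ℝ) * key

end Toda
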